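/- arXiv:1106.3755 — 2 statements merged into one kernel-verified Lean document; each statement's English description precedes it below -/
import Mathlib

section
/- If a finite family M of nonnegative d×d matrices is eventually positive, then M possesses a second invariant cone: there exists a closed convex pointed cone K̃ with K̃ \ {0} ⊂ int(R^d_+) such that A_i K̃ ⊆ K̃ for every A_i ∈ M. -/
open Matrix

/-- The product of length `k` of matrices from the family `A`. -/
noncomputable def prodMat {d m : ℕ} (A : Fin m → Matrix (Fin d) (Fin d) ℝ)
    (k : ℕ) (w : Fin k → Fin m) : Matrix (Fin d) (Fin d) ℝ :=
  (List.ofFn fun i => A (w i)).prod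

lemma list_prod_nonneg {d : ℕ} (l : List (Matrix (Fin d) (Fin d) ℝ))
    (h : ∀ M ∈ l, ∀ p q, 0 ≤ M p q) : ∀ p q, 0 ≤ l.prod p q := by
  induction l with
  | nil =>
    intro p q
    rcases eq_or_ne p q with rfl | hpq <;> simp [Matrix.one_apply, *]
  | cons a t ih =>
    intro p q
    rw [List.prod_cons, Matrix.mul_apply]
    exact Finset.sum_nonneg fun j _ => mul_nonneg (h a (by simp) p j)
      (ih (fun M hM => h M (by simp [hM])) j q)

lemma prodMat_nonneg {d m : ℕ} (A : Fin m → Matrix (Fin d) (Fin d) ℝ)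
    (hA : ∀ i p q, 0 ≤ A i p q) (k : ℕ) (w : Fin k → Fin m) :
    ∀ p q, 0 ≤ prodMat A k w p q := by
  apply list_prod_nonneg
  intro M hM
  simp only [List.mem_ofFn] at hM
  obtain ⟨i, rfl⟩ := hM
  exact hA _

lemma prodMat_add {d m : ℕ} (A : Fin m → Matrix (Fin d) (Fin d) ℝ) (k s : ℕ)
    (w : Fin (k + s) → Fin m) :
    prodMat A (k + s) w =
      prodMat A k (fun i => w (Fin.castAdd s i)) * prodMat A s (fun j => w (Fin.natAdd k j)) := by
  unfold prodMat
  rw [List.ofFn_add, List.prod_append]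
  rfl

lemma prodMat_cons {d m : ℕ} (A : Fin m → Matrix (Fin d) (Fin d) ℝ) (r : ℕ)
    (i : Fin m) (w : Fin r → Fin m) :
    prodMat A (r + 1) (Fin.cons i w) = A i * prodMat A r w := by
  unfold prodMat
  rw [List.ofFn_succ]
  simp [List.prod_cons]

lemma mulVec_list_sum {d : ℕ} (M : Matrix (Fin d) (Fin d) ℝ) (l : List (Fin d → ℝ)) :
    M.mulVec l.sum = (l.map (fun y => M.mulVec y)).sum := by
  induction l with
  | nil => simp
  | cons a t ih => simp [Matrix.mulVec_add, ih]

/-- an eventually positive finite family of nonnegative matrices possesses a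
second invariant cone: a nontrivial closed convex pointed cone `K̃` with
`K̃ \ {0} ⊆ int (ℝ^d₊)`, invariant under every matrix of the family. -/
theorem eventually_positive_has_second_invariant_cone
    {d m : ℕ} (hd : 0 < d)
    (A : Fin m → Matrix (Fin d) (Fin d) ℝ)
    (hnonneg : ∀ i p q, 0 ≤ A i p q)
    (hevpos : ∃ k : ℕ, ∀ r : ℕ, k ≤ r → ∀ w : Fin r → Fin m, ∀ p q, 0 < prodMat A r w p q) :
    ∃ Kt : Set (Fin d → ℝ),
      IsClosed Kt ∧ Convex ℝ Kt ∧
      (∀ x ∈ Kt, ∀ t : ℝ, 0 ≤ t → t • x ∈ Kt) ∧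
      (∀ x ∈ Kt, -x ∈ Kt → x = 0) ∧
      (∃ x ∈ Kt, x ≠ 0) ∧
      (Kt \ {0} ⊆ interior {x : Fin d → ℝ | ∀ p, 0 ≤ x p}) ∧
      (∀ i : Fin m, ∀ x ∈ Kt, (A i).mulVec x ∈ Kt) := by
  have p0 : Fin d := ⟨0, hd⟩
  haveI : Nonempty (Fin d) := ⟨p0⟩
  -- open positive orthant sits inside the interior of the orthant
  have hopen : {x : Fin d → ℝ | ∀ p, 0 < x p} ⊆ interior {x : Fin d → ℝ | ∀ p, 0 ≤ x p} := by
    apply interior_maximal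
    · intro x hx p; exact (hx p).le
    · have : {x : Fin d → ℝ | ∀ p, 0 < x p} = ⋂ p, {x : Fin d → ℝ | 0 < x p} := by
        ext x; simp
      rw [this]
      exact isOpen_iInter_of_finite fun p =>
        isOpen_lt continuous_const (continuous_apply p)
  rcases Nat.eq_zero_or_pos m with hm | hm
  · -- no matrices at all: take the ray spanned by the all-ones vector
    subst hm
    refine ⟨{x : Fin d → ℝ | (∀ p, x p = x p0) ∧ 0 ≤ x p0}, ?_, ?_, ?_, ?_, ?_, ?_, ?_⟩
    · have : {x : Fin d → ℝ | (∀ p, x p = x p0) ∧ 0 ≤ x p0} =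
        (⋂ p, {x : Fin d → ℝ | x p = x p0}) ∩ {x : Fin d → ℝ | 0 ≤ x p0} := by
        ext x; simp [Set.mem_iInter]
      rw [this]
      exact IsClosed.inter (isClosed_iInter fun p =>
        isClosed_eq (continuous_apply p) (continuous_apply p0))
        (isClosed_le continuous_const (continuous_apply p0))
    · intro x hx y hy a b ha hb hab
      constructor
      · intro p
        simp only [Pi.add_apply, Pi.smul_apply, smul_eq_mul]
        rw [hx.1 p, hy.1 p]
      · simp only [Pi.add_apply, Pi.smul_apply, smul_eq_mul]
        exact add_nonneg (mul_nonneg ha hx.2) (mul_nonneg hb hy.2)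
    · intro x hx t ht
      constructor
      · intro p; simp only [Pi.smul_apply, smul_eq_mul]; rw [hx.1 p]
      · simp only [Pi.smul_apply, smul_eq_mul]; exact mul_nonneg ht hx.2
    · intro x hx hnx
      have h0 : x p0 = 0 := le_antisymm (by have := hnx.2; simpa using this) hx.2
      funext p; rw [hx.1 p, h0]; simp
    · refine ⟨(fun _ => 1), ⟨fun p => rfl, zero_le_one⟩, ?_⟩
      intro h
      have := congrFun h p0
      norm_num at this
    · intro x hx
      obtain ⟨⟨hx1, hx2⟩, hx0⟩ := hx
      apply hopen
      intro p
      rw [hx1 p]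
      rcases lt_or_eq_of_le hx2 with h | h
      · exact h
      · exfalso; apply hx0; funext q; rw [hx1 q, ← h]; simp
    · intro i; exact i.elim0
  · -- main case
    obtain ⟨k0, hk0⟩ := hevpos
    set k := max k0 1 with hkdef
    have hk : ∀ r, k ≤ r → ∀ w : Fin r → Fin m, ∀ p q, 0 < prodMat A r w p q :=
      fun r hr => hk0 r (le_trans (le_max_left _ _) hr)
    haveI : Nonempty (Fin m) := ⟨⟨0, hm⟩⟩
    set P : (Fin k → Fin m) → Matrix (Fin d) (Fin d) ℝ := fun w => prodMat A k w with hPdef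
    have hP : ∀ w p q, 0 < P w p q := fun w => hk k le_rfl w
    set C : ℝ := Finset.univ.sup' Finset.univ_nonempty
      (fun t : (Fin k → Fin m) × Fin d × Fin d × Fin d =>
        P t.1 t.2.1 t.2.2.2 / P t.1 t.2.2.1 t.2.2.2) with hCdef
    have hC1 : ∀ w p q j, P w p j ≤ C * P w q j := by
      intro w p q j
      have h := Finset.le_sup' (f := fun t : (Fin k → Fin m) × Fin d × Fin d × Fin d =>
        P t.1 t.2.1 t.2.2.2 / P t.1 t.2.2.1 t.2.2.2) (Finset.mem_univ (w, p, q, j))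
      simp only at h
      exact (div_le_iff₀ (hP w q j)).mp h
    have hC0 : 1 ≤ C := by
      classical
      obtain ⟨w⟩ := (inferInstance : Nonempty (Fin k → Fin m))
      have h := Finset.le_sup' (f := fun t : (Fin k → Fin m) × Fin d × Fin d × Fin d =>
        P t.1 t.2.1 t.2.2.2 / P t.1 t.2.2.1 t.2.2.2) (Finset.mem_univ (w, p0, p0, p0))
      simp only at h
      rwa [div_self (hP w p0 p0).ne'] at h
    have hCpos : 0 < C := lt_of_lt_of_le one_pos hC0
    -- the "ratio" cone L
    set L : Set (Fin d → ℝ) :=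
      {x | (∀ p, 0 ≤ x p) ∧ ∀ p q, x p ≤ C * x q} with hLdef
    have hLclosed : IsClosed L := by
      have : L = (⋂ p, {x : Fin d → ℝ | 0 ≤ x p}) ∩
          ⋂ p, ⋂ q, {x : Fin d → ℝ | x p ≤ C * x q} := by
        ext x; simp [hLdef, Set.mem_iInter]
      rw [this]
      exact IsClosed.inter (isClosed_iInter fun p =>
          isClosed_le continuous_const (continuous_apply p))
        (isClosed_iInter fun p => isClosed_iInter fun q =>
          isClosed_le (continuous_apply p) (continuous_const.mul (continuous_apply q)))
    have hL0 : (0 : Fin d → ℝ) ∈ L := by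
      constructor
      · intro p; simp
      · intro p q; simp
    have hLadd : ∀ x ∈ L, ∀ y ∈ L, x + y ∈ L := by
      intro x hx y hy
      constructor
      · intro p; exact add_nonneg (hx.1 p) (hy.1 p)
      · intro p q
        have := add_le_add (hx.2 p q) (hy.2 p q)
        simpa [mul_add] using this
    -- generators
    set G : Set (Fin d → ℝ) :=
      {x | ∃ r, k ≤ r ∧ ∃ w : Fin r → Fin m, ∃ v : Fin d → ℝ,
        (∀ p, 0 ≤ v p) ∧ x = (prodMat A r w).mulVec v} with hGdef
    have hGL : G ⊆ L := by
      rintro x ⟨r, hr, w, v, hv, rfl⟩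
      obtain ⟨s, rfl⟩ : ∃ s, r = k + s := ⟨r - k, (Nat.add_sub_cancel' hr).symm⟩
      rw [prodMat_add, ← Matrix.mulVec_mulVec]
      set u : Fin d → ℝ := (prodMat A s fun j => w (Fin.natAdd k j)).mulVec v with hudef
      have hu : ∀ j, 0 ≤ u j := by
        intro j
        simp only [hudef, Matrix.mulVec, dotProduct]
        apply Finset.sum_nonneg
        intro l _
        exact mul_nonneg (prodMat_nonneg A hnonneg _ _ j l) (hv l)
      set w1 : Fin k → Fin m := fun i => w (Fin.castAdd s i) with hw1def
      constructor
      · intro p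
        simp only [Matrix.mulVec, dotProduct]
        apply Finset.sum_nonneg
        intro j _
        exact mul_nonneg (hP w1 p j).le (hu j)
      · intro p q
        have h1 : ∀ j ∈ Finset.univ, P w1 p j * u j ≤ C * P w1 q j * u j := by
          intro j _
          exact mul_le_mul_of_nonneg_right (hC1 w1 p q j) (hu j)
        calc ((P w1).mulVec u) p = ∑ j, P w1 p j * u j := rfl
          _ ≤ ∑ j, C * P w1 q j * u j := Finset.sum_le_sum h1
          _ = C * ∑ j, P w1 q j * u j := by rw [Finset.mul_sum]; simp [mul_assoc]
          _ = C * ((P w1).mulVec u) q := rfl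
    have hGsmul : ∀ x ∈ G, ∀ t : ℝ, 0 ≤ t → t • x ∈ G := by
      rintro x ⟨r, hr, w, v, hv, rfl⟩ t ht
      exact ⟨r, hr, w, t • v, fun p => mul_nonneg ht (hv p),
        (Matrix.mulVec_smul _ _ _).symm⟩
    have hGA : ∀ i : Fin m, ∀ x ∈ G, (A i).mulVec x ∈ G := by
      rintro i x ⟨r, hr, w, v, hv, rfl⟩
      refine ⟨r + 1, le_trans hr (Nat.le_succ r), Fin.cons i w, v, hv, ?_⟩
      rw [prodMat_cons, ← Matrix.mulVec_mulVec]
    -- the cone of finite sums of generators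
    set S : Set (Fin d → ℝ) :=
      {x | ∃ l : List (Fin d → ℝ), (∀ y ∈ l, y ∈ G) ∧ x = l.sum} with hSdef
    have hS0 : (0 : Fin d → ℝ) ∈ S := ⟨[], by simp, by simp⟩
    have hSadd : ∀ x ∈ S, ∀ y ∈ S, x + y ∈ S := by
      rintro x ⟨l1, hl1, rfl⟩ y ⟨l2, hl2, rfl⟩
      refine ⟨l1 ++ l2, ?_, by rw [List.sum_append]⟩
      intro z hz
      rcases List.mem_append.mp hz with h | h
      · exact hl1 z h
      · exact hl2 z h
    have hSsmul : ∀ x ∈ S, ∀ t : ℝ, 0 ≤ t → t • x ∈ S := by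
      rintro x ⟨l, hl, rfl⟩ t ht
      refine ⟨l.map (fun y => t • y), ?_, ?_⟩
      · intro z hz
        obtain ⟨y, hy, rfl⟩ := List.mem_map.mp hz
        exact hGsmul y (hl y hy) t ht
      · rw [← List.smul_sum]
    have hSA : ∀ i : Fin m, ∀ x ∈ S, (A i).mulVec x ∈ S := by
      rintro i x ⟨l, hl, rfl⟩
      refine ⟨l.map (fun y => (A i).mulVec y), ?_, ?_⟩
      · intro z hz
        obtain ⟨y, hy, rfl⟩ := List.mem_map.mp hz
        exact hGA i y (hl y hy)
      · exact mulVec_list_sum _ l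
    have hSL : S ⊆ L := by
      rintro x ⟨l, hl, rfl⟩
      induction l with
      | nil => simpa using hL0
      | cons a t ih =>
        rw [List.sum_cons]
        exact hLadd a (hGL (hl a (by simp))) t.sum (ih (fun y hy => hl y (by simp [hy])))
    have hSconv : Convex ℝ S := by
      intro x hx y hy a b ha hb hab
      exact hSadd _ (hSsmul x hx a ha) _ (hSsmul y hy b hb)
    refine ⟨closure S, isClosed_closure, hSconv.closure, ?_, ?_, ?_, ?_, ?_⟩
    · -- scaling
      intro x hx t ht
      exact map_mem_closure (continuous_const_smul t) hx
        (fun y hy => hSsmul y hy t ht)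
    · -- pointed
      intro x hx hnx
      have h1 : x ∈ L := closure_minimal hSL hLclosed hx
      have h2 : -x ∈ L := closure_minimal hSL hLclosed hnx
      funext p
      have := h2.1 p
      simp only [Pi.neg_apply, Left.nonneg_neg_iff] at this
      exact le_antisymm this (h1.1 p)
    · -- nontrivial
      set x0 : Fin d → ℝ := (prodMat A k (fun _ => ⟨0, hm⟩)).mulVec (fun _ => 1) with hx0
      have hx0S : x0 ∈ S := ⟨[x0], by
        rintro y hy
        simp only [List.mem_singleton] at hy
        subst hy
        exact ⟨k, le_rfl, _, _, fun p => zero_le_one, rfl⟩, by simp⟩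
      refine ⟨x0, subset_closure hx0S, ?_⟩
      intro h
      have h1 : x0 p0 = 0 := by rw [h]; rfl
      have h2 : 0 < x0 p0 := by
        simp only [hx0, Matrix.mulVec, dotProduct, mul_one]
        exact Finset.sum_pos (fun j _ => hk k le_rfl _ p0 j) Finset.univ_nonempty
      rw [h1] at h2; exact lt_irrefl 0 h2
    · -- interior
      rintro x ⟨hx, hx0⟩
      have hL : x ∈ L := closure_minimal hSL hLclosed hx
      apply hopen
      intro p
      have hne : ∃ q, x q ≠ 0 := by
        by_contra h
        push_neg at h
        exact hx0 (funext h)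
      obtain ⟨q, hq⟩ := hne
      have hq' : 0 < x q := lt_of_le_of_ne (hL.1 q) (Ne.symm hq)
      have := hL.2 q p
      nlinarith [hL.1 p, hCpos]
    · -- invariance
      intro i x hx
      have hcont : Continuous fun y : Fin d → ℝ => (A i).mulVec y :=
        LinearMap.continuous_of_finiteDimensional ((A i).mulVecLin)
      exact map_mem_closure hcont hx (fun y hy => hSA i y hy)
end

section
/- Let M̃ be an irreducible finite family of matrices with ρ̂(M̃) ≥ 1, and suppose for some nonzero vector v the trajectory set Ω(v) = ∪_{k ≥ 0} {Γ v : Γ ∈ M̃^k} is bounded and spans R^d. Then ρ̂(M̃) = 1, and the closure of the symmetrized convex hull of Ω(v) is the unit ball of an extremal norm for M̃. -/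
open Filter Topology

/-- The product of length `k` of operators from the family `A`. -/
noncomputable def prodCLM {E : Type*} [NormedAddCommGroup E] [NormedSpace ℝ E] {m : ℕ}
    (A : Fin m → E →L[ℝ] E) (k : ℕ) (w : Fin k → Fin m) : E →L[ℝ] E :=
  (List.ofFn fun i => A (w i)).prod

lemma prodCLM_zero {E : Type*} [NormedAddCommGroup E] [NormedSpace ℝ E] {m : ℕ}
    (A : Fin m → E →L[ℝ] E) (w : Fin 0 → Fin m) : prodCLM A 0 w = 1 := by
  simp [prodCLM]

lemma prodCLM_succ {E : Type*} [NormedAddCommGroup E] [NormedSpace ℝ E] {m : ℕ}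
    (A : Fin m → E →L[ℝ] E) (k : ℕ) (w : Fin (k + 1) → Fin m) :
    prodCLM A (k + 1) w = A (w 0) * prodCLM A k (w ∘ Fin.succ) := by
  simp [prodCLM, List.ofFn_succ, Function.comp]

/-- let `M̃` be an irreducible family with `ρ̂(M̃) ≥ 1` and suppose for some
`v ≠ 0` the trajectory set `Ω(v) = ⋃_k M̃^k v` is bounded and spans `ℝ^d`.  Then
`ρ̂(M̃) = 1` and the closure of the symmetrized convex hull of `Ω(v)` is the unit ball of
an extremal norm for `M̃`: it is a compact convex symmetric body with `0` in its interior,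
mapped into itself by every `Ã_j`. -/
theorem trajectory_hull_is_extremal_ball
    {d m : ℕ} (hm : 0 < m)
    (A : Fin m → (EuclideanSpace ℝ (Fin d) →L[ℝ] EuclideanSpace ℝ (Fin d)))
    (h_irr : ¬ ∃ W : Submodule ℝ (EuclideanSpace ℝ (Fin d)),
      W ≠ ⊥ ∧ W ≠ ⊤ ∧ ∀ j : Fin m, ∀ x ∈ W, A j x ∈ W)
    (ρhat : ℝ)
    (hjsr : Tendsto (fun k : ℕ => (⨆ w : Fin k → Fin m, ‖prodCLM A k w‖) ^ ((1 : ℝ) / k))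
      atTop (𝓝 ρhat))
    (hρ : 1 ≤ ρhat)
    (v : EuclideanSpace ℝ (Fin d)) (hv : v ≠ 0)
    (h_bdd : Bornology.IsBounded
      {x | ∃ k : ℕ, ∃ w : Fin k → Fin m, prodCLM A k w v = x})
    (h_span : Submodule.span ℝ {x | ∃ k : ℕ, ∃ w : Fin k → Fin m, prodCLM A k w v = x} = ⊤) :
    ρhat = 1 ∧
      (let Ω : Set (EuclideanSpace ℝ (Fin d)) :=
        {x | ∃ k : ℕ, ∃ w : Fin k → Fin m, prodCLM A k w v = x}
       let D := closure (convexHull ℝ (Ω ∪ -Ω))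
       Convex ℝ D ∧ IsCompact D ∧ (∀ x ∈ D, -x ∈ D) ∧ 0 ∈ interior D ∧
         ∀ j : Fin m, ∀ x ∈ D, A j x ∈ D) := by
  haveI : Nonempty (Fin m) := Fin.pos_iff_nonempty.mp hm
  set Ω : Set (EuclideanSpace ℝ (Fin d)) :=
    {x | ∃ k : ℕ, ∃ w : Fin k → Fin m, prodCLM A k w v = x} with hΩ
  set S : Set (EuclideanSpace ℝ (Fin d)) := Ω ∪ -Ω with hS
  set D : Set (EuclideanSpace ℝ (Fin d)) := closure (convexHull ℝ S) with hD
  -- basic membership facts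
  have hvΩ : v ∈ Ω := ⟨0, Fin.elim0, by simp [prodCLM_zero]⟩
  have hΩD : Ω ⊆ D := fun x hx =>
    subset_closure (subset_convexHull ℝ S (Or.inl hx))
  -- convexity
  have hconvD : Convex ℝ D := (convex_convexHull ℝ S).closure
  -- A j maps Ω into Ω
  have hAΩ : ∀ j : Fin m, ∀ x ∈ Ω, A j x ∈ Ω := by
    rintro j x ⟨k, w, rfl⟩
    refine ⟨k + 1, Fin.cons j w, ?_⟩
    rw [prodCLM_succ]
    have hco : Fin.cons j w ∘ Fin.succ = w := funext fun i => by
      simp [Function.comp]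
    rw [hco]
    simp
  -- symmetry: -S = S
  have hSneg : -S = S := by
    ext x
    simp only [hS, Set.mem_neg, Set.mem_union, Set.mem_neg, neg_neg]
    tauto
  -- D symmetric
  have hsymm : ∀ x ∈ D, -x ∈ D := by
    intro x hx
    have h1 : -convexHull ℝ S = convexHull ℝ S := by
      rw [← convexHull_neg, hSneg]
    have h2 : -x ∈ -closure (convexHull ℝ S) := Set.neg_mem_neg.mpr hx
    rwa [neg_closure, ← h1, neg_neg] at h2
  -- boundedness and compactness
  have hSbdd : Bornology.IsBounded S := by
    refine Bornology.IsBounded.union h_bdd ?_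
    simpa using h_bdd.neg
  have hDbdd : Bornology.IsBounded D :=
    (isBounded_convexHull.mpr hSbdd).closure
  have hcomp : IsCompact D :=
    Metric.isCompact_of_isClosed_isBounded isClosed_closure hDbdd
  -- 0 ∈ D
  have h0D : (0 : EuclideanSpace ℝ (Fin d)) ∈ D := by
    have hvD : v ∈ D := hΩD hvΩ
    have hnvD : -v ∈ D := hsymm v hvD
    have := hconvD hvD hnvD (by norm_num : (0:ℝ) ≤ 1/2) (by norm_num : (0:ℝ) ≤ 1/2)
      (by norm_num)
    simpa using this
  -- A j maps D into D
  have hAD : ∀ j : Fin m, ∀ x ∈ D, A j x ∈ D := by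
    intro j x hx
    have himg : A j '' convexHull ℝ S ⊆ convexHull ℝ S := by
      rw [show A j '' convexHull ℝ S = (A j).toLinearMap '' convexHull ℝ S from rfl,
        LinearMap.image_convexHull]
      refine convexHull_mono ?_
      rintro y ⟨z, hz, rfl⟩
      rcases hz with hz | hz
      · exact Or.inl (hAΩ j z hz)
      · exact Or.inr (by simpa using hAΩ j (-z) hz)
    have h1 : A j x ∈ A j '' closure (convexHull ℝ S) := ⟨x, hx, rfl⟩
    have h2 := image_closure_subset_closure_image (A j).continuous h1
    exact closure_mono himg h2
  -- 0 is in the interior of D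
  have h0int : (0 : EuclideanSpace ℝ (Fin d)) ∈ interior D := by
    have hDne : D.Nonempty := ⟨0, h0D⟩
    have hvec : vectorSpan ℝ D = ⊤ := by
      rw [eq_top_iff, ← h_span]
      refine Submodule.span_le.mpr ?_
      intro x hx
      have : x - 0 ∈ vectorSpan ℝ D := vsub_mem_vectorSpan ℝ (hΩD hx) h0D
      simpa using this
    have haff : affineSpan ℝ D = ⊤ :=
      (AffineSubspace.affineSpan_eq_top_iff_vectorSpan_eq_top_of_nonempty ℝ
        (EuclideanSpace ℝ (Fin d)) (EuclideanSpace ℝ (Fin d)) hDne).mpr hvec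
    obtain ⟨x, hx⟩ := (hconvD.interior_nonempty_iff_affineSpan_eq_top).mpr haff
    have hneg : -x ∈ interior D := by
      have hsub : -(interior D) ⊆ D := by
        intro y hy
        have : -y ∈ interior D := Set.mem_neg.mp hy
        simpa using hsymm (-y) (interior_subset this)
      have hopen : IsOpen (-(interior D) : Set (EuclideanSpace ℝ (Fin d))) :=
        isOpen_interior.neg
      have : -(interior D) ⊆ interior D := interior_maximal hsub hopen
      exact this (Set.neg_mem_neg.mpr hx)
    have h := (hconvD.interior) hx hneg (by norm_num : (0:ℝ) ≤ 1/2)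
      (by norm_num : (0:ℝ) ≤ 1/2) (by norm_num)
    simpa using h
  -- products map D into D
  have hprodD : ∀ k : ℕ, ∀ w : Fin k → Fin m, ∀ x ∈ D, prodCLM A k w x ∈ D := by
    intro k
    induction k with
    | zero => intro w x hx; simpa [prodCLM_zero] using hx
    | succ k ih =>
      intro w x hx
      rw [prodCLM_succ]
      exact hAD (w 0) _ (ih (w ∘ Fin.succ) x hx)
  -- bound on operator norms
  obtain ⟨ε, hε, hball⟩ := Metric.mem_nhds_iff.mp (mem_interior_iff_mem_nhds.mp h0int)
  obtain ⟨R, hR⟩ := hDbdd.subset_closedBall 0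
  have hR0 : 0 ≤ R := by
    have := hR h0D
    simpa using this
  set C : ℝ := 2 * R / ε with hC
  have hC0 : 0 ≤ C := by positivity
  have hopbd : ∀ k : ℕ, ∀ w : Fin k → Fin m, ‖prodCLM A k w‖ ≤ C := by
    intro k w
    refine ContinuousLinearMap.opNorm_le_bound _ hC0 ?_
    intro x
    rcases eq_or_ne x 0 with rfl | hx0
    · simp
    · have hnx : 0 < ‖x‖ := norm_pos_iff.mpr hx0
      set c : ℝ := ε / (2 * ‖x‖) with hc
      have hc0 : 0 < c := by positivity
      have hyD : c • x ∈ D := by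
        apply hball
        rw [Metric.mem_ball, dist_zero_right, norm_smul, Real.norm_eq_abs,
          abs_of_pos hc0, hc]
        rw [div_mul_eq_mul_div, div_lt_iff₀ (by positivity)]
        nlinarith
      have hPy : prodCLM A k w (c • x) ∈ D := hprodD k w _ hyD
      have hPyn : ‖prodCLM A k w (c • x)‖ ≤ R := by
        have := hR hPy
        simpa using this
      rw [map_smul, norm_smul, Real.norm_eq_abs, abs_of_pos hc0] at hPyn
      have hkey : ‖prodCLM A k w x‖ ≤ R / c := by
        rw [le_div_iff₀ hc0, mul_comm]
        exact hPyn
      calc ‖prodCLM A k w x‖ ≤ R / c := hkey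
        _ = C * ‖x‖ := by rw [hc, hC]; field_simp
  -- the sup sequence is bounded by max C 1
  set C' : ℝ := max C 1 with hC'
  have hC'1 : 1 ≤ C' := le_max_right _ _
  have hC'0 : 0 < C' := lt_of_lt_of_le one_pos hC'1
  have hsup_le : ∀ k : ℕ, (⨆ w : Fin k → Fin m, ‖prodCLM A k w‖) ≤ C' :=
    fun k => ciSup_le fun w => le_trans (hopbd k w) (le_max_left _ _)
  have hsup_nonneg : ∀ k : ℕ, 0 ≤ (⨆ w : Fin k → Fin m, ‖prodCLM A k w‖) := by
    intro k
    obtain ⟨w⟩ := (inferInstance : Nonempty (Fin k → Fin m))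
    refine le_trans (norm_nonneg (prodCLM A k w))
      (le_ciSup (f := fun w : Fin k → Fin m => ‖prodCLM A k w‖) ?_ w)
    exact (Set.finite_range _).bddAbove
  -- C' ^ (1/k) → 1
  have hg : Tendsto (fun k : ℕ => C' ^ ((1 : ℝ) / k)) atTop (𝓝 1) := by
    have h1 : Tendsto (fun k : ℕ => Real.log C' * (1 / k)) atTop (𝓝 0) := by
      simpa using tendsto_one_div_atTop_nhds_zero_nat.const_mul (Real.log C')
    have h2 : Tendsto (fun k : ℕ => Real.exp (Real.log C' * (1 / k))) atTop
        (𝓝 (Real.exp 0)) := (Real.continuous_exp.tendsto 0).comp h1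
    rw [Real.exp_zero] at h2
    refine h2.congr fun k => ?_
    rw [Real.rpow_def_of_pos hC'0, mul_comm]
  -- conclude ρhat ≤ 1
  have hle : ρhat ≤ 1 := by
    refine le_of_tendsto_of_tendsto' hjsr hg fun k => ?_
    exact Real.rpow_le_rpow (hsup_nonneg k) (hsup_le k) (by positivity)
  have hρ1 : ρhat = 1 := le_antisymm hle hρ
  exact ⟨hρ1, hconvD, hcomp, hsymm, h0int, hAD⟩
end
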